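/- Let G = UΣVᵀ be a real m×n matrix with polar factor P = UVᵀ and let α > ‖G‖_2 be finite. Then U Σ^{1/p} Vᵀ = α^{1/p} · Σ_{i=0}^∞ binom(1/p, i) ((1/α) G Pᵀ − I)^i · P, where the series converges, and binom(1/p, i) is the generalized binomial coefficient. -/

import Mathlib

open Matrix

/-- Generalized binomial coefficient `binom(q, i) = q(q−1)⋯(q−i+1)/i!`. -/
noncomputable def gbinom (q : ℝ) (i : ℕ) : ℝ :=
  (∏ j ∈ Finset.range i, (q - (j : ℝ))) / (Nat.factorial i : ℝ)

lemma gbinom_zero (q : ℝ) : gbinom q 0 = 1 := by simp [gbinom]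

lemma gbinom_succ (q : ℝ) (i : ℕ) :
    gbinom q (i + 1) * (i + 1) = (q - i) * gbinom q i := by
  have h : ((i + 1 : ℕ) : ℝ) ≠ 0 := by positivity
  simp only [gbinom, Finset.prod_range_succ, Nat.factorial_succ, Nat.cast_mul]
  field_simp
  push_cast
  ring

lemma abs_gbinom_le_one {q : ℝ} (hq0 : 0 < q) (hq1 : q ≤ 1) (i : ℕ) :
    |gbinom q i| ≤ 1 := by
  induction i with
  | zero => simp [gbinom_zero]
  | succ i ih =>
    have hne : ((i : ℝ) + 1) ≠ 0 := by positivity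
    have h1 : gbinom q (i + 1) = (q - i) * gbinom q i / (i + 1) := by
      field_simp
      linarith [gbinom_succ q i]
    rw [h1, abs_div, abs_mul]
    have h2 : |q - (i : ℝ)| ≤ (i : ℝ) + 1 := by
      rw [abs_le]
      constructor <;> push_cast <;> nlinarith [Nat.cast_nonneg (α := ℝ) i]
    have h3 : |((i : ℝ) + 1)| = (i : ℝ) + 1 := abs_of_pos (by positivity)
    rw [h3, div_le_one (by positivity)]
    calc |q - i| * |gbinom q i| ≤ ((i:ℝ)+1) * 1 :=
          mul_le_mul h2 ih (abs_nonneg _) (by positivity)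
      _ = (i:ℝ)+1 := mul_one _

lemma binom_hasSum {q x : ℝ} (hq0 : 0 < q) (hq1 : q ≤ 1) (hx1 : -1 < x) (hx0 : x ≤ 0) :
    HasSum (fun i : ℕ => gbinom q i * x ^ i) ((1 + x) ^ q) := by
  rcases eq_or_lt_of_le hx0 with h0 | hxneg
  · subst h0
    have : HasSum (fun i : ℕ => gbinom q i * (0:ℝ) ^ i) 1 := by
      have := hasSum_single (f := fun i : ℕ => gbinom q i * (0:ℝ) ^ i) 0
        (fun b hb => by simp [zero_pow hb])
      simpa [gbinom] using this
    simpa [Real.one_rpow] using this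
  · -- x < 0 case
    set ρ : ℝ := (1 - x) / 2 with hρdef
    have hρ0 : 0 < ρ := by simp only [hρdef]; linarith
    have hρ1 : ρ < 1 := by simp only [hρdef]; linarith
    set s : Set ℝ := Set.Ioo (-ρ) ρ with hsdef
    have hxs : x ∈ s := by
      constructor <;> simp only [hρdef] <;> linarith
    have h0s : (0:ℝ) ∈ s := by constructor <;> simp only [hρdef] <;> linarith
    set g : ℕ → ℝ → ℝ := fun n y => gbinom q n * y ^ n with hgdef
    set g' : ℕ → ℝ → ℝ := fun n y => gbinom q n * (n * y ^ (n - 1)) with hg'def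
    set u : ℕ → ℝ := fun n => (1 / ρ) * ((n : ℝ) * ρ ^ n) with hudef
    have hu : Summable u := by
      have := summable_pow_mul_geometric_of_norm_lt_one (R := ℝ) 1
        (r := ρ) (by rw [Real.norm_eq_abs, abs_of_pos hρ0]; exact hρ1)
      simpa [hudef] using this.mul_left (1 / ρ)
    have hg : ∀ n : ℕ, ∀ y ∈ s, HasDerivAt (g n) (g' n y) y := fun n y _ =>
      (hasDerivAt_pow n y).const_mul (gbinom q n)
    have habs : ∀ y ∈ s, |y| ≤ ρ := by
      intro y hy
      rw [abs_le]
      exact ⟨le_of_lt hy.1, le_of_lt hy.2⟩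
    have hg' : ∀ n : ℕ, ∀ y ∈ s, ‖g' n y‖ ≤ u n := by
      intro n y hy
      have h1 : ‖g' n y‖ ≤ (n : ℝ) * ρ ^ (n - 1) := by
        rw [Real.norm_eq_abs, hg'def, abs_mul, abs_mul, Nat.abs_cast, abs_pow]
        calc |gbinom q n| * ((n:ℝ) * |y| ^ (n-1)) ≤ 1 * ((n:ℝ) * ρ ^ (n-1)) := by
              apply mul_le_mul (abs_gbinom_le_one hq0 hq1 n) _ (by positivity) zero_le_one
              exact mul_le_mul_of_nonneg_left
                (pow_le_pow_left₀ (abs_nonneg y) (habs y hy) _) (Nat.cast_nonneg n)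
          _ = (n:ℝ) * ρ ^ (n-1) := one_mul _
      refine h1.trans ?_
      cases n with
      | zero => simp [hudef]
      | succ k =>
        apply le_of_eq
        simp only [hudef, Nat.add_sub_cancel, Nat.cast_add, Nat.cast_one, pow_succ]
        field_simp
    have hsum : ∀ y ∈ s, Summable (fun n => g n y) := by
      intro y hy
      apply Summable.of_norm_bounded (g := fun n => ρ ^ n)
        (summable_geometric_of_lt_one (le_of_lt hρ0) hρ1)
      intro n
      rw [Real.norm_eq_abs, hgdef, abs_mul, abs_pow]
      calc |gbinom q n| * |y| ^ n ≤ 1 * ρ ^ n :=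
            mul_le_mul (abs_gbinom_le_one hq0 hq1 n)
              (pow_le_pow_left₀ (abs_nonneg y) (habs y hy) n) (by positivity) zero_le_one
        _ = ρ ^ n := one_mul _
    have hsum' : ∀ y ∈ s, Summable (fun n => g' n y) := by
      intro y hy
      exact Summable.of_norm_bounded hu (fun n => hg' n y hy)
    set F : ℝ → ℝ := fun z => ∑' n, g n z with hFdef
    set D : ℝ → ℝ := fun y => ∑' n, g' n y with hDdef
    have hF : ∀ y ∈ s, HasDerivAt F (D y) y := by
      intro y hy
      exact hasDerivAt_tsum_of_isPreconnected hu isOpen_Ioo (isPreconnected_Ioo)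
        hg hg' h0s (hsum 0 h0s) hy
    -- ODE identity
    have hkey : ∀ y ∈ s, (1 + y) * D y = q * F y := by
      intro y hy
      have hS' : HasSum (fun n => g' n y) (D y) := (hsum' y hy).hasSum
      have hshift : HasSum (fun n => g' (n + 1) y) (D y) := by
        refine (hasSum_nat_add_iff (f := fun n => g' n y) 1).mpr ?_
        simpa [hg'def] using hS'
      have hA : HasSum (fun n : ℕ => (q - n) * (gbinom q n * y ^ n)) (D y) := by
        have he : (fun n : ℕ => g' (n + 1) y) =
            fun n : ℕ => (q - n) * (gbinom q n * y ^ n) := by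
          funext n
          have := gbinom_succ q n
          simp only [hg'def, Nat.add_sub_cancel, Nat.cast_add, Nat.cast_one]
          linear_combination (y ^ n) * this
        rwa [he] at hshift
      have hB : HasSum (fun n : ℕ => (n : ℝ) * (gbinom q n * y ^ n)) (y * D y) := by
        have := hS'.mul_left y
        have he : (fun n : ℕ => y * g' n y) =
            fun n : ℕ => (n : ℝ) * (gbinom q n * y ^ n) := by
          funext n
          cases n with
          | zero => simp [hg'def]
          | succ k =>
            simp only [hg'def, Nat.add_sub_cancel]
            rw [pow_succ]
            ring
        rwa [he] at this
      have hAB := hA.add hB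
      have he2 : (fun n : ℕ => (q - n) * (gbinom q n * y ^ n) + (n:ℝ) * (gbinom q n * y ^ n)) =
          fun n : ℕ => q * (gbinom q n * y ^ n) := by funext n; ring
      rw [he2] at hAB
      have hC : HasSum (fun n : ℕ => q * (gbinom q n * y ^ n)) (q * F y) :=
        (hsum y hy).hasSum.mul_left q
      have := hAB.unique hC
      linarith [this]
    -- H = F * (1+y)^(-q) has zero derivative
    set H : ℝ → ℝ := fun y => F y * (1 + y) ^ (-q) with hHdef
    have hH : ∀ y ∈ s, HasDerivAt H 0 y := by
      intro y hy
      have hpos : (0:ℝ) < 1 + y := by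
        have := hy.1
        simp only [hsdef, Set.mem_Ioo] at hy
        nlinarith [hy.1, hρ1]
      have hr : HasDerivAt (fun z : ℝ => (1 + z) ^ (-q)) (-q * (1 + y) ^ (-q - 1)) y := by
        have h1 : HasDerivAt (fun z : ℝ => 1 + z) 1 y := by
          simpa using (hasDerivAt_id y).const_add 1
        have h2 := h1.rpow_const (p := -q) (Or.inl (ne_of_gt hpos))
        simpa using h2
      have hprod := (hF y hy).mul hr
      have hval : D y * (1 + y) ^ (-q) + F y * (-q * (1 + y) ^ (-q - 1)) = 0 := by
        have hsplit : (1 + y) ^ (-q) = (1 + y) ^ (-q - 1) * (1 + y) := by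
          have h6 := Real.rpow_add hpos (-q - 1) 1
          have h5 : -q - 1 + 1 = -q := by ring
          rw [h5, Real.rpow_one] at h6
          exact h6
        rw [hsplit]
        have hk := hkey y hy
        set A := (1 + y) ^ (-q - 1)
        linear_combination A * hk
      rwa [hval] at hprod
    -- constancy
    have hconst : H x = H 0 := by
      have := Convex.norm_image_sub_le_of_norm_hasDerivWithin_le (f := H)
        (f' := fun _ => (0:ℝ)) (s := s) (C := 0)
        (fun y hy => (hH y hy).hasDerivWithinAt)
        (fun y hy => by simp) (convex_Ioo _ _) h0s hxs
      simp only [zero_mul, Real.norm_eq_abs] at this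
      have := abs_nonpos_iff.1 this
      linarith [sub_eq_zero.1 this]
    have hF0 : F 0 = 1 := by
      have h1 : HasSum (fun n => g n 0) 1 := by
        have := hasSum_single (f := fun n : ℕ => g n 0) 0
          (fun b hb => by simp [hgdef, zero_pow hb])
        simpa [hgdef, gbinom] using this
      exact h1.tsum_eq
    have hH0 : H 0 = 1 := by
      simp only [hHdef]
      rw [hF0]
      norm_num
    have hFx : F x = (1 + x) ^ q := by
      have hpos : (0:ℝ) < 1 + x := by linarith
      have h2 : F x * (1 + x) ^ (-q) = 1 := hconst.trans hH0
      have h3 : (1 + x) ^ (-q) = ((1 + x) ^ q)⁻¹ := Real.rpow_neg (le_of_lt hpos) q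
      have h4 : (1 + x) ^ q ≠ 0 := ne_of_gt (Real.rpow_pos_of_pos hpos q)
      rw [h3, mul_inv_eq_one₀ h4] at h2
      linarith
    have h := (hsum x hxs).hasSum
    rw [show (∑' n, g n x) = F x from rfl, hFx] at h
    exact h

/-- Convergent binomial series for the fractional map: with `P = UVᵀ` the polar factor of
`G = UΣVᵀ` and `α > ‖G‖₂`,
`U Σ^{1/p} Vᵀ = α^{1/p} ∑ᵢ binom(1/p, i) ((1/α) G Pᵀ − I)^i P`. -/
theorem stmt8 {m n r : ℕ} (p : ℝ) (hp : 1 ≤ p)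
    (G : Matrix (Fin m) (Fin n) ℝ) (U : Matrix (Fin m) (Fin r) ℝ)
    (V : Matrix (Fin n) (Fin r) ℝ) (σ : Fin r → ℝ)
    (hσ : ∀ i, 0 < σ i) (hU : Uᵀ * U = 1) (hV : Vᵀ * V = 1)
    (hG : G = U * Matrix.diagonal σ * Vᵀ)
    (α : ℝ) (hα0 : 0 < α) (hα : ∀ i, σ i < α) :
    let P := U * Vᵀ
    ∃ S : Matrix (Fin m) (Fin n) ℝ,
      HasSum (fun i : ℕ => gbinom (1 / p) i • ((((1 / α) • (G * Pᵀ)) - 1) ^ i * P)) S ∧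
      U * Matrix.diagonal (fun i => σ i ^ (1 / p)) * Vᵀ = α ^ (1 / p) • S := by
  intro P
  set q : ℝ := 1 / p with hqdef
  have hp0 : 0 < p := lt_of_lt_of_le one_pos hp
  have hq0 : 0 < q := by positivity
  have hq1 : q ≤ 1 := by rw [hqdef]; rw [div_le_one hp0]; linarith
  set x : Fin r → ℝ := fun j => σ j / α - 1 with hxdef
  have hx1 : ∀ j, -1 < x j := fun j => by
    have : 0 < σ j / α := div_pos (hσ j) hα0
    simp only [hxdef]; linarith
  have hx0 : ∀ j, x j ≤ 0 := fun j => by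
    have : σ j / α < 1 := (div_lt_one hα0).mpr (hα j)
    simp only [hxdef]; linarith
  set E : Matrix (Fin m) (Fin m) ℝ := ((1 / α) • (G * Pᵀ)) - 1 with hEdef
  -- G * Pᵀ = U * diagonal σ * Uᵀ
  have hGP : G * Pᵀ = U * Matrix.diagonal σ * Uᵀ := by
    show G * (U * Vᵀ)ᵀ = _
    rw [hG, Matrix.transpose_mul, Matrix.transpose_transpose]
    rw [Matrix.mul_assoc (U * Matrix.diagonal σ) Vᵀ (V * Uᵀ),
      ← Matrix.mul_assoc Vᵀ V Uᵀ, hV, Matrix.one_mul]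
  -- key multiplication step
  have hstep : ∀ X : Matrix (Fin r) (Fin r) ℝ,
      E * (U * X * Vᵀ) = U * (((1 / α) • (Matrix.diagonal σ * X)) - X) * Vᵀ := by
    intro X
    have hUU : Uᵀ * (U * (X * Vᵀ)) = X * Vᵀ := by
      rw [← Matrix.mul_assoc, hU, Matrix.one_mul]
    rw [hEdef, hGP]
    rw [Matrix.sub_mul, Matrix.smul_mul, Matrix.one_mul]
    rw [Matrix.mul_sub, Matrix.sub_mul]
    congr 1
    rw [Matrix.mul_smul, Matrix.smul_mul]
    congr 1
    rw [Matrix.mul_assoc U (Matrix.diagonal σ) Uᵀ, Matrix.mul_assoc U X Vᵀ,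
      Matrix.mul_assoc U (Matrix.diagonal σ * Uᵀ) _, Matrix.mul_assoc (Matrix.diagonal σ) Uᵀ _,
      hUU, Matrix.mul_assoc U (Matrix.diagonal σ * X) Vᵀ, Matrix.mul_assoc (Matrix.diagonal σ) X Vᵀ]
  -- powers applied to P
  have hpow : ∀ i : ℕ, E ^ i * P =
      U * Matrix.diagonal (fun j => x j ^ i) * Vᵀ := by
    intro i
    induction i with
    | zero =>
      simp only [pow_zero, Matrix.one_mul]
      show U * Vᵀ = _
      simp
    | succ i ih =>
      rw [pow_succ', Matrix.mul_assoc, ih, hstep]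
      have hd : (1 / α) • (Matrix.diagonal σ * Matrix.diagonal fun j => x j ^ i) -
          (Matrix.diagonal fun j => x j ^ i) = Matrix.diagonal fun j => x j ^ (i + 1) := by
        rw [Matrix.diagonal_mul_diagonal]
        ext a b
        rcases eq_or_ne a b with rfl | hne
        · simp only [Matrix.sub_apply, Matrix.smul_apply, Matrix.diagonal_apply_eq,
            smul_eq_mul, Pi.mul_apply, hxdef]
          rw [pow_succ]
          have hαne : α ≠ 0 := ne_of_gt hα0
          field_simp
        · simp [Matrix.diagonal_apply_ne _ hne]
      rw [hd]
  -- terms in diagonal form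
  have hterm : ∀ i : ℕ, gbinom q i • (E ^ i * P) =
      U * Matrix.diagonal (fun j => gbinom q i * x j ^ i) * Vᵀ := by
    intro i
    have hdiag : Matrix.diagonal (fun j => gbinom q i * x j ^ i) =
        gbinom q i • Matrix.diagonal (fun j => x j ^ i) := by
      rw [← Matrix.diagonal_smul]
      congr 1
    rw [hpow i, hdiag, Matrix.mul_smul, Matrix.smul_mul]
  -- the limit
  refine ⟨U * Matrix.diagonal (fun j => (σ j / α) ^ q) * Vᵀ, ?_, ?_⟩
  · -- HasSum
    have hj : ∀ j, HasSum (fun i : ℕ => gbinom q i * x j ^ i) ((σ j / α) ^ q) := by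
      intro j
      have := binom_hasSum hq0 hq1 (hx1 j) (hx0 j)
      have he : 1 + x j = σ j / α := by simp [hxdef]
      rwa [he] at this
    have hgoal : HasSum
        (fun i : ℕ => U * Matrix.diagonal (fun j => gbinom q i * x j ^ i) * Vᵀ)
        (U * Matrix.diagonal (fun j => (σ j / α) ^ q) * Vᵀ) := by
      refine Pi.hasSum.mpr ?_
      intro k
      rw [Pi.hasSum]
      intro l
      have hentry : ∀ d : Fin r → ℝ,
          (U * Matrix.diagonal d * Vᵀ) k l = ∑ j, U k j * d j * Vᵀ j l := by
        intro d
        rw [Matrix.mul_assoc, Matrix.mul_apply]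
        refine Finset.sum_congr rfl fun j _ => ?_
        rw [Matrix.diagonal_mul, ← mul_assoc]
      simp only [hentry]
      exact hasSum_sum fun j _ => ((hj j).mul_left (U k j)).mul_right (Vᵀ j l)
    have he2 : (fun i : ℕ => gbinom q i • (E ^ i * P)) =
        fun i : ℕ => U * Matrix.diagonal (fun j => gbinom q i * x j ^ i) * Vᵀ :=
      funext hterm
    rw [← hqdef] at *
    show HasSum (fun i : ℕ => gbinom q i • (E ^ i * P)) _
    rw [he2]
    exact hgoal
  · -- closed form
    have hdg : Matrix.diagonal (fun i => σ i ^ q) =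
        α ^ q • Matrix.diagonal (fun j => (σ j / α) ^ q) := by
      have harg : (fun i => σ i ^ q) = α ^ q • fun j => (σ j / α) ^ q := by
        funext j
        show σ j ^ q = α ^ q * (σ j / α) ^ q
        rw [Real.div_rpow (le_of_lt (hσ j)) (le_of_lt hα0)]
        have hαq : (0:ℝ) < α ^ q := Real.rpow_pos_of_pos hα0 q
        field_simp
      rw [← Matrix.diagonal_smul, harg]
    show U * Matrix.diagonal (fun i => σ i ^ q) * Vᵀ = _
    rw [hdg, Matrix.mul_smul, Matrix.smul_mul]
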